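/- arXiv:2210.12821 — 4 statements merged into one kernel-verified Lean document; each statement's English description precedes it below -/
import Mathlib

section
/- Let q ≥ 5 be an odd prime power with q ≡ ξ (mod 3), ξ ∈ {1, -1}, and let μ ∈ F_q^* with μ ≠ 1 and μ ≠ 1/9. Set Δ(μ,γ) = 27(3γ²μ² - 4μ³ - 4γ⁴ - γ² + 6μγ²). Then the number of γ ∈ F_q such that the cubic t³ - 3γt² + 3μt - γ has exactly one root in F_q equals the number of γ ∈ F_q with η(-3Δ(μ,γ)) = -ξ. -/
open scoped Classical

/-- The quadratic character of a field: `η a = 1` if `a` is a nonzero square,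
`η a = -1` if `a` is a non-square, and `η 0 = 0`. -/
noncomputable def quadChar (F : Type*) [Field F] (a : F) : ℤ :=
  if a = 0 then 0 else if IsSquare a then 1 else -1

section Aux

variable {F : Type*} [Field F]

lemma aux_isSquare_mul_sq {x y : F} (hy : y ≠ 0) :
    IsSquare (x * y ^ 2) ↔ IsSquare x := by
  constructor
  · rintro ⟨s, hs⟩
    refine ⟨s / y, ?_⟩
    field_simp
    linear_combination hs
  · rintro ⟨s, hs⟩
    exact ⟨s * y, by rw [hs]; ring⟩

lemma aux_quad_root_iff (h2 : (2 : F) ≠ 0) (p r : F) :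
    (∃ t : F, t ^ 2 + p * t + r = 0) ↔ IsSquare (p ^ 2 - 4 * r) := by
  constructor
  · rintro ⟨t, ht⟩
    exact ⟨2 * t + p, by linear_combination -4 * ht⟩
  · rintro ⟨s, hs⟩
    refine ⟨(s - p) / 2, ?_⟩
    field_simp
    linear_combination -hs

lemma aux_cast_ne_zero [Fintype F] {m : ℕ} (h : Nat.Coprime m (Fintype.card F)) :
    (m : F) ≠ 0 := by
  intro h0
  have hq : ((Fintype.card F : ℕ) : F) = 0 := FiniteField.cast_card_eq_zero F
  obtain ⟨a, b, hab⟩ := Nat.isCoprime_iff_coprime.mpr h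
  have hcast := congrArg (fun z : ℤ => (z : F)) hab
  push_cast at hcast
  rw [h0, hq] at hcast
  simp at hcast

lemma aux_isSquare_neg_three [Fintype F] (h2 : (2 : F) ≠ 0) (h3 : (3 : F) ≠ 0) :
    IsSquare (-3 : F) ↔ Fintype.card F % 3 = 1 := by
  haveI : Fact (Nat.Prime 3) := ⟨by norm_num⟩
  constructor
  · rintro ⟨s, hs⟩
    have hω : ((s - 1) / 2) ^ 2 + ((s - 1) / 2) + 1 = 0 := by
      field_simp
      linear_combination -hs
    set ω : F := (s - 1) / 2 with hωdef
    have hω0 : ω ≠ 0 := by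
      intro h
      rw [h] at hω; simp at hω
    have hω1 : ω ≠ 1 := by
      intro h
      rw [h] at hω
      apply h3; linear_combination hω
    set u : Fˣ := Units.mk0 ω hω0 with hu
    have hω3 : ω ^ 3 = 1 := by linear_combination (ω - 1) * hω
    have hu3 : u ^ 3 = 1 := by
      ext
      rw [Units.val_pow_eq_pow_val, Units.val_one, hu, Units.val_mk0]
      exact hω3
    have hu1 : u ≠ 1 := by
      intro h
      apply hω1
      have := congrArg (fun v : Fˣ => (v : F)) h
      simpa [hu] using this
    have hord : orderOf u = 3 := orderOf_eq_prime hu3 hu1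
    have hdvd : (3 : ℕ) ∣ Fintype.card Fˣ := hord ▸ orderOf_dvd_card
    rw [Fintype.card_units] at hdvd
    have hpos : 0 < Fintype.card F := Fintype.card_pos
    omega
  · intro h
    have hdvd : (3 : ℕ) ∣ Fintype.card Fˣ := by
      rw [Fintype.card_units]
      omega
    obtain ⟨u, hu⟩ := exists_prime_orderOf_dvd_card (G := Fˣ) 3 hdvd
    set ω : F := ((u : Fˣ) : F) with hωdef
    have hω3 : ω ^ 3 = 1 := by
      have := pow_orderOf_eq_one u
      rw [hu] at this
      have := congrArg (fun v : Fˣ => (v : F)) this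
      simpa [hωdef] using this
    have hω1 : ω ≠ 1 := by
      intro h1
      have : u = 1 := Units.ext (by simpa [hωdef] using h1)
      rw [this] at hu
      simp at hu
    have hω : ω ^ 2 + ω + 1 = 0 := by
      have hfac : (ω - 1) * (ω ^ 2 + ω + 1) = 0 := by linear_combination hω3
      rcases mul_eq_zero.mp hfac with h | h
      · exact absurd (by linear_combination h) hω1
      · exact h
    exact ⟨2 * ω + 1, by linear_combination -4 * hω⟩

lemma aux_fixed_mem_range [Fintype F] (K : Type*) [Field K] [Algebra F K] {x : K}
    (hx : x ^ Fintype.card F = x) : ∃ t : F, algebraMap F K t = x := by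
  classical
  set q := Fintype.card F with hq
  set ι := algebraMap F K with hι
  set Pq : Polynomial K := Polynomial.X ^ q - Polynomial.X with hPq
  have hq2 : 2 ≤ q := Fintype.one_lt_card
  have hPq0 : Pq ≠ 0 := by
    intro h
    have := congrArg (fun f : Polynomial K => f.coeff q) h
    simp only [hPq, Polynomial.coeff_sub, Polynomial.coeff_X_pow, Polynomial.coeff_zero] at this
    rw [Polynomial.coeff_X, if_neg (by omega : ¬ 1 = q)] at this
    simp at this
  have hdeg : Pq.natDegree ≤ q := by
    refine le_trans (Polynomial.natDegree_sub_le _ _) ?_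
    simp [Polynomial.natDegree_X_pow, Polynomial.natDegree_X]
    omega
  set Φ : Finset K := Finset.univ.image ι with hΦ
  have hΦcard : Φ.card = q := by
    rw [hΦ, Finset.card_image_of_injective _ (algebraMap F K).injective, Finset.card_univ]
  have hsub : Φ ⊆ Pq.roots.toFinset := by
    intro w hw
    rw [hΦ, Finset.mem_image] at hw
    obtain ⟨t, -, rfl⟩ := hw
    rw [Multiset.mem_toFinset, Polynomial.mem_roots hPq0]
    simp only [Polynomial.IsRoot, hPq, Polynomial.eval_sub, Polynomial.eval_pow,
      Polynomial.eval_X]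
    rw [← map_pow, FiniteField.pow_card, sub_self]
  have hcard2 : Pq.roots.toFinset.card ≤ Φ.card := by
    rw [hΦcard]
    exact le_trans (Multiset.toFinset_card_le _) (le_trans (Polynomial.card_roots' Pq) hdeg)
  have heq : Φ = Pq.roots.toFinset := Finset.eq_of_subset_of_card_le hsub hcard2
  have hxmem : x ∈ Pq.roots.toFinset := by
    rw [Multiset.mem_toFinset, Polynomial.mem_roots hPq0]
    simp only [Polynomial.IsRoot, hPq, Polynomial.eval_sub, Polynomial.eval_pow,
      Polynomial.eval_X]
    rw [hx, sub_self]
  rw [← heq, hΦ, Finset.mem_image] at hxmem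
  obtain ⟨t, -, ht⟩ := hxmem
  exact ⟨t, ht⟩

/-- If the cubic `t³-3γt²+3μt-γ` has no root in the finite field `F`,
then its discriminant is a square. -/
lemma aux_noroot_isSquare [Fintype F] (γ μ : F)
    (hnr : ∀ t : F, t ^ 3 - 3 * γ * t ^ 2 + 3 * μ * t - γ ≠ 0) :
    IsSquare (27 * (3 * γ ^ 2 * μ ^ 2 - 4 * μ ^ 3 - 4 * γ ^ 4 - γ ^ 2 + 6 * μ * γ ^ 2)) := by
  classical
  by_cases hΔ : 27 * (3 * γ ^ 2 * μ ^ 2 - 4 * μ ^ 3 - 4 * γ ^ 4 - γ ^ 2 + 6 * μ * γ ^ 2) = 0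
  · rw [hΔ]; exact ⟨0, by ring⟩
  set P : Cubic F := ⟨1, -(3 * γ), 3 * μ, -γ⟩ with hPdef
  have ha : P.a ≠ 0 := one_ne_zero
  have hPdisc : P.discr = 27 * (3 * γ ^ 2 * μ ^ 2 - 4 * μ ^ 3 - 4 * γ ^ 4 - γ ^ 2
      + 6 * μ * γ ^ 2) := by
    simp only [Cubic.discr, hPdef]
    ring
  set K := P.toPoly.SplittingField with hK
  set ι : F →+* K := algebraMap F K with hι
  have hsplits : Polynomial.Splits (P.toPoly.map ι) := Polynomial.SplittingField.splits P.toPoly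
  obtain ⟨x, y, z, h3⟩ := (Cubic.splits_iff_roots_eq_three ha).mp hsplits
  have h0 : (Cubic.map ι P).toPoly ≠ 0 :=
    Cubic.ne_zero_of_a_ne_zero (by simp [Cubic.map, hPdef])
  -- root equations
  have hmem_iff : ∀ w : K, w ∈ (Cubic.map ι P).roots ↔
      w ^ 3 - ι (3 * γ) * w ^ 2 + ι (3 * μ) * w - ι γ = 0 := by
    intro w
    rw [Cubic.mem_roots_iff h0 w]
    constructor <;> intro h <;>
      · simp only [Cubic.map, hPdef, map_one, map_neg] at h ⊢
        linear_combination h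
  -- the Frobenius
  obtain ⟨p, -, n, hp, hpn⟩ := FiniteField.card' (K := F)
  haveI : Fact (Nat.Prime p) := ⟨hp⟩
  haveI hcharF : CharP F p := by
    have : CharP F (ringChar F) := ringChar.charP F
    obtain ⟨n', hp', hcard'⟩ := FiniteField.card F (ringChar F)
    have : ringChar F = p := by
      have h1 : p ∣ ringChar F ^ (n' : ℕ) := by
        rw [← hcard', hpn]
        exact dvd_pow_self p (by positivity)
      have := (Nat.Prime.dvd_of_dvd_pow hp h1)
      exact ((Nat.prime_dvd_prime_iff_eq hp hp').mp this).symm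
    exact this ▸ ringChar.charP F
  haveI : CharP K p := charP_of_injective_algebraMap (algebraMap F K).injective p
  haveI : ExpChar K p := ExpChar.prime hp
  set φ : K →+* K := iterateFrobenius K p n with hφdef
  have hφ : ∀ w : K, φ w = w ^ Fintype.card F := by
    intro w
    rw [hφdef, iterateFrobenius_def, hpn]
  have hιfix : ∀ c : F, φ (ι c) = ι c := by
    intro c
    rw [hφ, ← map_pow, FiniteField.pow_card]
  -- Frobenius permutes the roots
  have hperm : ∀ w : K, w ∈ (Cubic.map ι P).roots → φ w ∈ (Cubic.map ι P).roots := by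
    intro w hw
    rw [hmem_iff] at hw ⊢
    have := congrArg φ hw
    simpa only [map_sub, map_add, map_mul, map_pow, map_zero, hιfix] using this
  -- no root is fixed by Frobenius
  have hnofix : ∀ w : K, w ∈ (Cubic.map ι P).roots → φ w ≠ w := by
    intro w hw hfix
    rw [hφ] at hfix
    obtain ⟨t, ht⟩ := aux_fixed_mem_range K hfix
    have ht' : ι t = w := ht
    rw [hmem_iff, ← ht'] at hw
    apply hnr t
    apply ι.injective
    rw [map_zero]
    calc ι (t ^ 3 - 3 * γ * t ^ 2 + 3 * μ * t - γ)
        = ι t ^ 3 - ι (3 * γ) * ι t ^ 2 + ι (3 * μ) * ι t - ι γ := by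
          simp only [map_sub, map_add, map_mul, map_pow]
      _ = 0 := hw
  have hx : x ∈ (Cubic.map ι P).roots := by rw [h3]; simp
  have hy : y ∈ (Cubic.map ι P).roots := by rw [h3]; simp
  have hz : z ∈ (Cubic.map ι P).roots := by rw [h3]; simp
  -- distinctness of roots
  have hdisc := Cubic.discr_eq_prod_three_roots ha h3
  have hne : x ≠ y ∧ x ≠ z ∧ y ≠ z := by
    refine (Cubic.discr_ne_zero_iff_roots_ne ha h3).mp ?_
    rw [hPdisc]
    exact hΔ
  obtain ⟨hxy, hxz, hyz⟩ := hne
  have hinj : Function.Injective φ := φ.injective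
  -- Frobenius action on roots
  have hmemx := hperm x hx
  rw [h3] at hmemx
  simp only [Multiset.insert_eq_cons, Multiset.mem_cons, Multiset.mem_singleton] at hmemx
  have hmemy := hperm y hy
  rw [h3] at hmemy
  simp only [Multiset.insert_eq_cons, Multiset.mem_cons, Multiset.mem_singleton] at hmemy
  have hmemz := hperm z hz
  rw [h3] at hmemz
  simp only [Multiset.insert_eq_cons, Multiset.mem_cons, Multiset.mem_singleton] at hmemz
  have hfx := hnofix x hx
  have hfy := hnofix y hy
  have hfz := hnofix z hz
  -- δ is fixed by Frobenius
  have hδfix : φ ((x - y) * (x - z) * (y - z)) = (x - y) * (x - z) * (y - z) := by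
    rcases hmemx with h1 | h1 | h1
    · exact absurd h1 hfx
    · -- φ x = y
      have h2 : φ y = z := by
        rcases hmemy with h2 | h2 | h2
        · exfalso
          rcases hmemz with h4 | h4 | h4
          · exact hyz (hinj (h4.trans h2.symm)).symm
          · exact hxz (hinj (h4.trans h1.symm)).symm
          · exact hfz h4
        · exact absurd h2 hfy
        · exact h2
      have h4 : φ z = x := by
        rcases hmemz with h4 | h4 | h4
        · exact h4
        · exact absurd (hinj (h4.trans h1.symm)) (Ne.symm hxz)
        · exact absurd h4 hfz
      simp only [map_mul, map_sub, h1, h2, h4]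
      ring
    · -- φ x = z
      have h2 : φ z = y := by
        rcases hmemz with h2 | h2 | h2
        · exfalso
          rcases hmemy with h4 | h4 | h4
          · exact hyz (hinj (h4.trans h2.symm))
          · exact hfy h4
          · exact hxy (hinj (h4.trans h1.symm)).symm
        · exact h2
        · exact absurd h2 hfz
      have h4 : φ y = x := by
        rcases hmemy with h4 | h4 | h4
        · exact h4
        · exact absurd h4 hfy
        · exact absurd (hinj (h4.trans h1.symm)) (Ne.symm hxy)
      simp only [map_mul, map_sub, h1, h2, h4]
      ring
  -- hence δ is in the image of F
  rw [hφ] at hδfix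
  obtain ⟨s, hs⟩ := aux_fixed_mem_range K hδfix
  have hs' : ι s = (x - y) * (x - z) * (y - z) := hs
  have hP1 : ι P.a = 1 := map_one ι
  have hfinal : ι P.discr = ι (s * s) := by
    rw [hdisc, map_mul, hs']
    simp only [hP1]
    ring
  have hfin2 : P.discr = s * s := ι.injective hfinal
  refine ⟨s, ?_⟩
  rw [← hPdisc]
  exact hfin2

end Aux

/-- Let `q ≥ 5` be an odd prime power with `q ≡ ξ (mod 3)`,
`ξ ∈ {1,-1}`, and let `μ ∈ F_q^*` with `μ ≠ 1`, `μ ≠ 1/9`. With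
`Δ(μ,γ) = 27(3γ²μ² - 4μ³ - 4γ⁴ - γ² + 6μγ²)`, the number of `γ ∈ F_q` such that
`t³ - 3γt² + 3μt - γ` has exactly one root in `F_q` equals the number of `γ ∈ F_q`
with `η(-3Δ(μ,γ)) = -ξ`. -/
theorem stmt14 (q : ℕ) (hq5 : 5 ≤ q) (hodd : Odd q)
    (ξ : ℤ) (hξ : ξ = 1 ∨ ξ = -1) (hmod : (q : ℤ) ≡ ξ [ZMOD 3])
    (F : Type*) [Field F] [Fintype F] (hcard : Fintype.card F = q)
    (μ : F) (hμ0 : μ ≠ 0) (hμ1 : μ ≠ 1) (hμ9 : μ ≠ 1 / 9) :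
    Set.ncard {γ : F |
        ({t : F | t ^ 3 - 3 * γ * t ^ 2 + 3 * μ * t - γ = 0} : Set F).ncard = 1}
      = Set.ncard {γ : F |
          quadChar F (-3 * (27 * (3 * γ ^ 2 * μ ^ 2 - 4 * μ ^ 3 - 4 * γ ^ 4 - γ ^ 2
            + 6 * μ * γ ^ 2))) = -ξ} := by
  classical
  -- ξ and q mod 3
  have hq3 : (ξ = 1 ∧ q % 3 = 1) ∨ (ξ = -1 ∧ q % 3 = 2) := by
    have hmod' : (q : ℤ) % 3 = ξ % 3 := hmod
    rcases hξ with h | h <;> rw [h] at hmod' <;> [left; right] <;> exact ⟨h, by omega⟩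
  have hq3ne : q % 3 ≠ 0 := by rcases hq3 with ⟨-, h⟩ | ⟨-, h⟩ <;> omega
  have h2ne : (2 : F) ≠ 0 := by
    have h := aux_cast_ne_zero (F := F) (m := 2)
      (by rw [hcard]
          exact (Nat.Prime.coprime_iff_not_dvd (by norm_num)).mpr
            (by obtain ⟨k, hk⟩ := hodd; omega))
    simpa using h
  have h3ne : (3 : F) ≠ 0 := by
    have h := aux_cast_ne_zero (F := F) (m := 3)
      (by rw [hcard]
          exact (Nat.Prime.coprime_iff_not_dvd (by norm_num)).mpr
            (by omega))
    simpa using h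
  have hξne : ξ ≠ 0 := by rcases hξ with h | h <;> simp [h]
  -- quadChar is the quadratic character
  have hqc : ∀ a : F, quadChar F a = quadraticChar F a := by
    intro a
    rw [quadChar, quadraticChar_apply, quadraticCharFun]
    by_cases h : a = 0
    · simp [h]
    · by_cases h2 : IsSquare a <;> simp [h, h2]
  -- the value of χ at -3
  have hχ3 : quadraticChar F (-3 : F) = ξ := by
    rcases hq3 with ⟨hξ1, h31⟩ | ⟨hξ2, h32⟩
    · rw [hξ1]
      rw [quadraticChar_one_iff_isSquare (neg_ne_zero.mpr h3ne)]
      exact (aux_isSquare_neg_three h2ne h3ne).mpr (by rw [hcard]; exact h31)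
    · rw [hξ2]
      rw [quadraticChar_neg_one_iff_not_isSquare]
      intro hsq
      have := (aux_isSquare_neg_three h2ne h3ne).mp hsq
      rw [hcard] at this
      omega
  congr 1
  ext γ
  simp only [Set.mem_setOf_eq]
  set Δ : F := 27 * (3 * γ ^ 2 * μ ^ 2 - 4 * μ ^ 3 - 4 * γ ^ 4 - γ ^ 2 + 6 * μ * γ ^ 2)
    with hΔdef
  -- rewrite the RHS condition
  have hRHS : (quadChar F (-3 * Δ) = -ξ) ↔ ¬ IsSquare Δ := by
    rw [hqc, map_mul, hχ3]
    constructor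
    · intro h
      rw [← quadraticChar_neg_one_iff_not_isSquare]
      have : ξ * quadraticChar F Δ = ξ * (-1) := by rw [h]; ring
      exact mul_left_cancel₀ hξne this
    · intro h
      rw [quadraticChar_neg_one_iff_not_isSquare.mpr h]
      ring
  rw [hRHS]
  constructor
  · -- exactly one root → not a square
    intro h1
    obtain ⟨a, hset⟩ := Set.ncard_eq_one.mp h1
    have hfa : a ^ 3 - 3 * γ * a ^ 2 + 3 * μ * a - γ = 0 := by
      have : a ∈ {t : F | t ^ 3 - 3 * γ * t ^ 2 + 3 * μ * t - γ = 0} := by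
        rw [hset]; rfl
      exact this
    have hfac : ∀ t : F, t ^ 3 - 3 * γ * t ^ 2 + 3 * μ * t - γ
        = (t - a) * (t ^ 2 + (a - 3 * γ) * t + (a ^ 2 - 3 * γ * a + 3 * μ)) := by
      intro t
      linear_combination hfa
    -- the quadratic factor has no root
    have honly : ∀ t : F, t ^ 2 + (a - 3 * γ) * t + (a ^ 2 - 3 * γ * a + 3 * μ) = 0 → False := by
      intro t ht
      have hmem : t ∈ {t : F | t ^ 3 - 3 * γ * t ^ 2 + 3 * μ * t - γ = 0} := by
        show t ^ 3 - 3 * γ * t ^ 2 + 3 * μ * t - γ = 0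
        rw [hfac t, ht, mul_zero]
      rw [hset, Set.mem_singleton_iff] at hmem
      subst hmem
      -- so a is a double root; then b = 3γ - 2a is also a root
      have hb : (3 * γ - 2 * t) ^ 2 + (t - 3 * γ) * (3 * γ - 2 * t)
          + (t ^ 2 - 3 * γ * t + 3 * μ) = 0 := by
        linear_combination ht
      have hmemb : (3 * γ - 2 * t) ∈ {u : F | u ^ 3 - 3 * γ * u ^ 2 + 3 * μ * u - γ = 0} := by
        show (3 * γ - 2 * t) ^ 3 - 3 * γ * (3 * γ - 2 * t) ^ 2 + 3 * μ * (3 * γ - 2 * t) - γ = 0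
        rw [hfac, hb, mul_zero]
      rw [hset, Set.mem_singleton_iff] at hmemb
      -- hence γ = t, μ = t², and t³ = t, contradicting μ ∉ {0,1}
      have hγ : γ = t := by
        have h3γ : 3 * γ - 2 * t = t := hmemb
        have : (3 : F) * (γ - t) = 0 := by linear_combination h3γ
        rcases mul_eq_zero.mp this with h | h
        · exact absurd h h3ne
        · exact sub_eq_zero.mp h
      subst hγ
      have hμt : μ = γ ^ 2 := by
        have : (3 : F) * (μ - γ ^ 2) = 0 := by linear_combination ht
        rcases mul_eq_zero.mp this with h | h
        · exact absurd h h3ne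
        · exact sub_eq_zero.mp h
      subst hμt
      have hroots : γ * (γ ^ 2 - 1) = 0 := by linear_combination hfa
      rcases mul_eq_zero.mp hroots with h | h
      · exact hμ0 (by rw [h]; ring)
      · exact hμ1 (by rw [sub_eq_zero.mp h])
    -- discriminant identity
    have hID : Δ = ((a - 3 * γ) ^ 2 - 4 * (a ^ 2 - 3 * γ * a + 3 * μ))
        * (3 * a ^ 2 - 6 * γ * a + 3 * μ) ^ 2 := by
      rw [hΔdef]
      linear_combination (27 * (a ^ 3 - 3 * a ^ 2 * γ + 3 * a * μ + 4 * γ ^ 3 + γ - 6 * γ * μ))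
        * hfa
    have hW : (3 * a ^ 2 - 6 * γ * a + 3 * μ) ≠ 0 := by
      intro h
      exact honly a (by linear_combination h)
    have hD : ¬ IsSquare ((a - 3 * γ) ^ 2 - 4 * (a ^ 2 - 3 * γ * a + 3 * μ)) := by
      intro hsq
      obtain ⟨t, ht⟩ := (aux_quad_root_iff h2ne (a - 3 * γ) (a ^ 2 - 3 * γ * a + 3 * μ)).mpr hsq
      exact honly t ht
    intro hsq
    rw [hID] at hsq
    exact hD ((aux_isSquare_mul_sq hW).mp hsq)
  · -- not a square → exactly one root
    intro hns
    have hΔ0 : Δ ≠ 0 := by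
      intro h
      exact hns (h ▸ ⟨0, by ring⟩)
    -- there is a root
    have hroot : ∃ a : F, a ^ 3 - 3 * γ * a ^ 2 + 3 * μ * a - γ = 0 := by
      by_contra hnr
      push_neg at hnr
      exact hns (aux_noroot_isSquare γ μ hnr)
    obtain ⟨a, hfa⟩ := hroot
    have hfac : ∀ t : F, t ^ 3 - 3 * γ * t ^ 2 + 3 * μ * t - γ
        = (t - a) * (t ^ 2 + (a - 3 * γ) * t + (a ^ 2 - 3 * γ * a + 3 * μ)) := by
      intro t
      linear_combination hfa
    have hID : Δ = ((a - 3 * γ) ^ 2 - 4 * (a ^ 2 - 3 * γ * a + 3 * μ))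
        * (3 * a ^ 2 - 6 * γ * a + 3 * μ) ^ 2 := by
      rw [hΔdef]
      linear_combination (27 * (a ^ 3 - 3 * a ^ 2 * γ + 3 * a * μ + 4 * γ ^ 3 + γ - 6 * γ * μ))
        * hfa
    have hW : (3 * a ^ 2 - 6 * γ * a + 3 * μ) ≠ 0 := by
      intro h
      apply hΔ0
      rw [hID, h]
      ring
    have hD : ¬ IsSquare ((a - 3 * γ) ^ 2 - 4 * (a ^ 2 - 3 * γ * a + 3 * μ)) := by
      intro hsq
      apply hns
      rw [hID]
      exact (aux_isSquare_mul_sq hW).mpr hsq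
    have hg : ∀ t : F, t ^ 2 + (a - 3 * γ) * t + (a ^ 2 - 3 * γ * a + 3 * μ) ≠ 0 := by
      intro t ht
      exact hD ((aux_quad_root_iff h2ne _ _).mp ⟨t, ht⟩)
    rw [Set.ncard_eq_one]
    refine ⟨a, ?_⟩
    ext t
    simp only [Set.mem_setOf_eq, Set.mem_singleton_iff]
    constructor
    · intro hft
      rw [hfac t] at hft
      rcases mul_eq_zero.mp hft with h | h
      · exact sub_eq_zero.mp h
      · exact absurd h (hg t)
    · rintro rfl
      exact hfa
end

section
/- Let q ≥ 9 be a power of 3 and μ ∈ F_q^* with μ ≠ 1. Then the number of c ∈ F_q^* such that the cubic t³ + ct² - t - μc has exactly one root in F_q equals the number of c ∈ F_q^* such that μc⁴ + c² + 1 ≠ 0 and η( c⁴ / (μc⁴ + c² + 1) ) = -1. -/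
open scoped Classical

section aux
variable {F : Type*} [Field F]

/-- Key identity: with `(ct+1)z = c` in char 3. -/
lemma keyid (h3 : (3:F) = 0) {μ c t z : F} (hz : (c*t+1)*z = c) :
    c^3*z^3*(t^3 + c*t^2 - t - μ*c) = c^3 + c^4*z - (μ*c^4+c^2+1)*z^3 := by
  have hA : c^3*z^3*t^3 = c^3 - z^3 := by
    linear_combination (((c*t+1)*z)^2 + (c*t+1)*z*c + c^2) * hz
      - (c^2*z^3*t^2 + c*z^3*t) * h3
  have hB : c*t*z = c - z := by linear_combination hz
  linear_combination hA + (c^2*z*(c*t*z + c - z) - c^2*z^2) * hB + (c^2*z^3 - c^3*z^2) * h3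

/-- A root of the cubic never satisfies `ct+1 = 0` when the "discriminant" is nonzero. -/
lemma lem1 (h3 : (3:F) = 0) {μ c t : F} (hD : μ*c^4+c^2+1 ≠ 0)
    (hf : t^3 + c*t^2 - t - μ*c = 0) : c*t+1 ≠ 0 := by
  intro hct
  apply hD
  linear_combination (-(c^3))*hf + c^2*h3 + (c^2*t^2 + (c^3-c)*t - 2*c^2 + 1)*hct

lemma lem2 {c z : F} (hc : c ≠ 0) (hz : z ≠ 0) :
    (c*(z⁻¹ - c⁻¹)+1)*z = c := by
  field_simp; ring

/-- From a nonzero root of `H(z) = Dz³ - c⁴z - c³`, get a root of the cubic. -/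
lemma lem3 (h3 : (3:F) = 0) {μ c z : F} (hc : c ≠ 0) (hz : z ≠ 0)
    (hH : (μ*c^4+c^2+1)*z^3 - c^4*z - c^3 = 0) :
    (z⁻¹ - c⁻¹)^3 + c*(z⁻¹ - c⁻¹)^2 - (z⁻¹ - c⁻¹) - μ*c = 0 := by
  have h := keyid (μ := μ) h3 (lem2 hc hz)
  have h2 : c^3*z^3*((z⁻¹ - c⁻¹)^3 + c*(z⁻¹ - c⁻¹)^2 - (z⁻¹ - c⁻¹) - μ*c) = 0 := by
    linear_combination h - hH
  rcases mul_eq_zero.mp h2 with h' | h'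
  · exact absurd h' (mul_ne_zero (pow_ne_zero _ hc) (pow_ne_zero _ hz))
  · exact h'

/-- From a root `t` of the cubic, `z = c/(ct+1)` is a nonzero root of `H`. -/
lemma lem4 (h3 : (3:F) = 0) {μ c t : F} (hc : c ≠ 0) (hD : μ*c^4+c^2+1 ≠ 0)
    (hf : t^3 + c*t^2 - t - μ*c = 0) :
    (μ*c^4+c^2+1)*(c/(c*t+1))^3 - c^4*(c/(c*t+1)) - c^3 = 0 := by
  have hct := lem1 h3 hD hf
  have hrel : (c*t+1)*(c/(c*t+1)) = c := by field_simp
  have h := keyid (μ := μ) h3 hrel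
  linear_combination h - c^3*(c/(c*t+1))^3 * hf

end aux

section main
variable {F : Type*} [Field F] [Fintype F]

lemma key (h3 : (3:F) = 0) (μ c : F) (hc : c ≠ 0) :
    ({t : F | t ^ 3 + c * t ^ 2 - t - μ * c = 0} : Set F).ncard = 1 ↔
      (μ * c ^ 4 + c ^ 2 + 1 ≠ 0 ∧
        quadChar F (c ^ 4 / (μ * c ^ 4 + c ^ 2 + 1)) = -1) := by
  by_cases hD : μ * c ^ 4 + c ^ 2 + 1 = 0
  · -- double root case: exactly two roots
    have hcw : c * c⁻¹ = 1 := mul_inv_cancel₀ hc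
    have hset : ({t : F | t ^ 3 + c * t ^ 2 - t - μ * c = 0} : Set F)
        = {-c⁻¹, -c⁻¹ - c} := by
      ext t
      simp only [Set.mem_setOf_eq, Set.mem_insert_iff, Set.mem_singleton_iff]
      constructor
      · intro hf
        have hfac : (t + c⁻¹)^2 * (t + c⁻¹ + c) = 0 := by
          linear_combination hf + (t + t^2*c⁻¹ + t*c⁻¹^2)*h3 + c⁻¹^3*hD
            - (μ*c*((c*c⁻¹)^2 + c*c⁻¹ + 1) + c⁻¹*(c*c⁻¹+1) - (2*t+c⁻¹))*hcw
        rcases mul_eq_zero.mp hfac with h | h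
        · left
          have h' : t + c⁻¹ = 0 := pow_eq_zero_iff (n := 2) (by norm_num) |>.mp h
          linear_combination h'
        · right; linear_combination h
      · rintro (h | h) <;> subst h
        · linear_combination c⁻¹*h3 - c⁻¹^3*hD
            + (μ*c*((c*c⁻¹)^2 + c*c⁻¹ + 1) + c⁻¹*(c*c⁻¹+1) + c⁻¹)*hcw
        · linear_combination (c⁻¹ + c - c*c⁻¹^2 - c^2*c⁻¹)*h3 - c⁻¹^3*hD
            + (μ*c*((c*c⁻¹)^2 + c*c⁻¹ + 1) + c⁻¹*(c*c⁻¹+1) + c⁻¹ + 2*c)*hcw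
    have hne : (-c⁻¹ : F) ≠ -c⁻¹ - c := by
      intro h
      apply hc
      linear_combination h
    rw [hset, Set.ncard_pair hne]
    simp [hD]
  · -- separable case
    have hcD : c ^ 4 / (μ * c ^ 4 + c ^ 2 + 1) ≠ 0 :=
      div_ne_zero (pow_ne_zero _ hc) hD
    have hquad : quadChar F (c ^ 4 / (μ * c ^ 4 + c ^ 2 + 1)) = -1 ↔
        ¬ IsSquare (c ^ 4 / (μ * c ^ 4 + c ^ 2 + 1)) := by
      rw [quadChar, if_neg hcD]
      split_ifs with h
      · simp [h]
      · simp [h]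
    rw [hquad]
    simp only [hD, ne_eq, not_false_eq_true, true_and]
    by_cases hsq : IsSquare (c ^ 4 / (μ * c ^ 4 + c ^ 2 + 1))
    · -- square: 0 or ≥ 2 roots
      simp only [hsq, not_true_eq_false, iff_false]
      obtain ⟨s, hs⟩ := hsq
      have hs0 : s ≠ 0 := by
        intro h; apply hcD; rw [hs, h, mul_zero]
      have hs' : (μ*c^4+c^2+1) * s^2 = c^4 := by
        rw [div_eq_iff hD] at hs; linear_combination -hs
      intro h1
      obtain ⟨t0, ht0⟩ := Set.ncard_eq_one.mp h1
      have hf0 : t0^3 + c*t0^2 - t0 - μ*c = 0 := by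
        have : t0 ∈ ({t : F | t ^ 3 + c * t ^ 2 - t - μ * c = 0} : Set F) := by
          rw [ht0]; exact rfl
        simpa using this
      set z0 := c/(c*t0+1) with hz0def
      have hH0 := lem4 h3 hc hD hf0
      have hct0 := lem1 h3 hD hf0
      have hz00 : z0 ≠ 0 := div_ne_zero hc hct0
      have hH1 : (μ*c^4+c^2+1)*(z0+s)^3 - c^4*(z0+s) - c^3 = 0 := by
        linear_combination hH0 + s*hs' + ((μ*c^4+c^2+1)*(z0^2*s + z0*s^2))*h3
      have hz10 : z0 + s ≠ 0 := by
        intro h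
        rw [h] at hH1
        apply pow_ne_zero 3 hc
        linear_combination -hH1
      have hroot := lem3 h3 hc hz10 hH1
      have hmem : ((z0+s)⁻¹ - c⁻¹) ∈ ({t : F | t ^ 3 + c * t ^ 2 - t - μ * c = 0} : Set F) := hroot
      rw [ht0] at hmem
      have ht1 : (z0+s)⁻¹ - c⁻¹ = t0 := hmem
      -- derive z0 + s = z0
      have hrel1 : (c*t0+1)*(z0+s) = c := by
        rw [← ht1]; exact lem2 hc hz10
      have hrel0 : (c*t0+1)*z0 = c := by rw [hz0def]; field_simp
      have : z0 + s = z0 := mul_left_cancel₀ hct0 (hrel1.trans hrel0.symm)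
      exact hs0 (by linear_combination this)
    · -- nonsquare: exactly one root
      simp only [hsq, not_false_eq_true, iff_true]
      have hinj : Function.Injective (fun z : F => (μ*c^4+c^2+1)*z^3 - c^4*z) := by
        intro z w h
        simp only at h
        by_contra hne
        have hzw : z - w ≠ 0 := sub_ne_zero.mpr hne
        have h2 : (z - w) * ((μ*c^4+c^2+1)*(z-w)^2 - c^4) = 0 := by
          linear_combination h - ((μ*c^4+c^2+1)*(z^2*w - z*w^2))*h3
        rcases mul_eq_zero.mp h2 with h' | h'
        · exact hzw h'
        · apply hsq
          refine ⟨z - w, ?_⟩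
          rw [div_eq_iff hD]
          linear_combination -h'
      have hsurj := (Finite.injective_iff_surjective).mp hinj
      obtain ⟨z0, hz0⟩ := hsurj (c^3)
      simp only at hz0
      have hH0 : (μ*c^4+c^2+1)*z0^3 - c^4*z0 - c^3 = 0 := by linear_combination hz0
      have hz00 : z0 ≠ 0 := by
        intro h
        rw [h] at hH0
        apply pow_ne_zero 3 hc
        linear_combination -hH0
      rw [Set.ncard_eq_one]
      refine ⟨z0⁻¹ - c⁻¹, ?_⟩
      ext t
      simp only [Set.mem_setOf_eq, Set.mem_singleton_iff]
      constructor
      · intro hf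
        have hct := lem1 h3 hD hf
        have hHz := lem4 h3 hc hD hf
        have : c/(c*t+1) = z0 := by
          apply hinj
          simp only
          linear_combination hHz - hH0
        have hrel : (c*t+1)*z0 = c := by rw [← this]; field_simp
        -- solve for t
        field_simp
        linear_combination hrel
      · intro h
        rw [h]
        exact lem3 h3 hc hz00 hH0

end main

/-- Let `q ≥ 9` be a power of `3` and `μ ∈ F_q^*`, `μ ≠ 1`. Then the
number of `c ∈ F_q^*` such that `t³ + ct² - t - μc` has exactly one root in `F_q` equals
the number of `c ∈ F_q^*` with `μc⁴ + c² + 1 ≠ 0` and `η(c⁴ / (μc⁴ + c² + 1)) = -1`. -/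
theorem stmt16 (n : ℕ) (hn : 2 ≤ n)
    (F : Type*) [Field F] [Fintype F] (hcard : Fintype.card F = 3 ^ n)
    (μ : F) (hμ0 : μ ≠ 0) (hμ1 : μ ≠ 1) :
    Set.ncard {c : F | c ≠ 0 ∧
        ({t : F | t ^ 3 + c * t ^ 2 - t - μ * c = 0} : Set F).ncard = 1}
      = Set.ncard {c : F | c ≠ 0 ∧ μ * c ^ 4 + c ^ 2 + 1 ≠ 0 ∧
          quadChar F (c ^ 4 / (μ * c ^ 4 + c ^ 2 + 1)) = -1} := by
  have h3 : (3 : F) = 0 := by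
    have h := FiniteField.cast_card_eq_zero F
    rw [hcard] at h
    push_cast at h
    exact pow_eq_zero_iff (by omega) |>.mp h
  congr 1
  ext c
  simp only [Set.mem_setOf_eq]
  exact and_congr_right fun hc => key h3 μ c hc
end

section
/- Let q ≥ 8 be an even prime power and μ ∈ F_q^* with μ ≠ 1. Then the number of points of the line ℓ_μ that lie in exactly one osculating plane of the twisted cubic equals the number of γ ∈ F_q such that the cubic t³ + γt² + μt + γ has exactly one root in F_q. -/
/-- The osculating plane `π_osc(t)` of the twisted cubic, as a subset of `F_q⁴`:
for `t ∈ F_q` it is `{x | x₀ - 3t·x₁ + 3t²·x₂ - t³·x₃ = 0}`, and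
`π_osc(∞)` is `{x | x₃ = 0}`. -/
def oscSet {F : Type*} [Field F] : Option F → Set (Fin 4 → F)
  | none => {x | x 3 = 0}
  | some t => {x | x 0 - 3 * t * x 1 + 3 * t ^ 2 * x 2 - t ^ 3 * x 3 = 0}

section aux
variable {F : Type*} [Field F]

/-- The linear functional `x ↦ c₀x₀ + c₁x₁ + c₂x₂ + c₃x₃`. -/
private def lfun (c : Fin 4 → F) : (Fin 4 → F) →ₗ[F] F where
  toFun x := c 0 * x 0 + c 1 * x 1 + c 2 * x 2 + c 3 * x 3
  map_add' x y := by simp only [Pi.add_apply]; ring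
  map_smul' m x := by simp only [Pi.smul_apply, smul_eq_mul, RingHom.id_apply]; ring

private lemma oscSet_eq_ker (τ : Option F) :
    ∃ c : Fin 4 → F, oscSet τ = ↑(LinearMap.ker (lfun c)) := by
  cases τ with
  | none =>
    refine ⟨![0,0,0,1], ?_⟩
    ext x
    simp [oscSet, lfun, LinearMap.mem_ker]
  | some t =>
    refine ⟨![1, -(3*t), 3*t^2, -(t^3)], ?_⟩
    ext x
    simp only [oscSet, Set.mem_setOf_eq, SetLike.mem_coe, LinearMap.mem_ker, lfun,
      LinearMap.coe_mk, AddHom.coe_mk, Matrix.cons_val_zero, Matrix.cons_val_one,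
      Matrix.head_cons, Matrix.cons_val_two, Matrix.tail_cons, Matrix.cons_val_three]
    constructor <;> intro h <;> linear_combination h

private lemma span_subset_osc_iff (τ : Option F) (v : Fin 4 → F) :
    (↑(Submodule.span F {v}) : Set (Fin 4 → F)) ⊆ oscSet τ ↔ v ∈ oscSet τ := by
  obtain ⟨c, hc⟩ := oscSet_eq_ker τ
  rw [hc]
  constructor
  · intro h; exact h (Submodule.mem_span_singleton_self v)
  · intro h
    exact_mod_cast SetLike.coe_subset_coe.mpr
      (Submodule.span_le.mpr (Set.singleton_subset_iff.mpr h))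

private lemma oscSet_injective (h2 : (2:F) = 0) :
    Function.Injective (oscSet : Option F → Set (Fin 4 → F)) := by
  have key : ∀ t : F, oscSet (some t) ≠ oscSet (none : Option F) := by
    intro t hab
    have h1 : (![1,0,0,0] : Fin 4 → F) ∈ oscSet (none : Option F) := by simp [oscSet]
    rw [← hab] at h1
    simp [oscSet] at h1
  intro a b hab
  match a, b with
  | none, none => rfl
  | none, some t => exact absurd hab.symm (key t)
  | some t, none => exact absurd hab (key t)
  | some t, some s =>
    have h1 : (![t,1,0,0] : Fin 4 → F) ∈ oscSet (some t) := by
      simp only [oscSet, Set.mem_setOf_eq, Matrix.cons_val_zero, Matrix.cons_val_one,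
        Matrix.head_cons, Matrix.cons_val_two, Matrix.tail_cons, Matrix.cons_val_three]
      linear_combination (-t) * h2
    rw [hab] at h1
    simp only [oscSet, Set.mem_setOf_eq, Matrix.cons_val_zero, Matrix.cons_val_one,
      Matrix.head_cons, Matrix.cons_val_two, Matrix.tail_cons, Matrix.cons_val_three] at h1
    congr 1
    linear_combination h1 + s * h2

/-- The set of osculating planes containing the point `span{v}` is the image under
`oscSet` of the parameters `τ` with `v ∈ oscSet τ`. -/
private lemma osc_through_eq (v : Fin 4 → F) :
    {π : Set (Fin 4 → F) | (∃ τ : Option F, π = oscSet τ) ∧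
        (↑(Submodule.span F {v}) : Set (Fin 4 → F)) ⊆ π}
      = oscSet '' {τ : Option F | v ∈ oscSet τ} := by
  ext π
  simp only [Set.mem_setOf_eq, Set.mem_image]
  constructor
  · rintro ⟨⟨τ, rfl⟩, hsub⟩
    exact ⟨τ, (span_subset_osc_iff τ v).mp hsub, rfl⟩
  · rintro ⟨τ, hτ, rfl⟩
    exact ⟨⟨τ, rfl⟩, (span_subset_osc_iff τ v).mpr hτ⟩

/-- In char 2, the parameters of osculating planes through `(γ, μ, γ, 1)` correspond
exactly to the roots of `t³ + γt² + μt + γ`. -/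
private lemma tau_set_eq (h2 : (2:F) = 0) (μ γ : F) :
    {τ : Option F | (![γ, μ, γ, 1] : Fin 4 → F) ∈ oscSet τ}
      = some '' {t : F | t ^ 3 + γ * t ^ 2 + μ * t + γ = 0} := by
  ext τ
  cases τ with
  | none =>
    simp [oscSet]
  | some t =>
    simp only [oscSet, Set.mem_setOf_eq, Matrix.cons_val_zero, Matrix.cons_val_one,
      Matrix.head_cons, Matrix.cons_val_two, Matrix.tail_cons, Matrix.cons_val_three,
      Set.mem_image, Option.some.injEq]
    constructor
    · intro h
      exact ⟨t, by linear_combination h + (t^3 - γ*t^2 + 2*μ*t) * h2, rfl⟩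
    · rintro ⟨s, hs, rfl⟩
      linear_combination hs - (s^3 - γ*s^2 + 2*μ*s) * h2

/-- In char 2, exactly two osculating planes pass through `(1,0,1,0)`. -/
private lemma inf_tau_set_eq (h2 : (2:F) = 0) :
    {τ : Option F | (![1, 0, 1, 0] : Fin 4 → F) ∈ oscSet τ}
      = {none, some 1} := by
  ext τ
  cases τ with
  | none => simp [oscSet]
  | some t =>
    simp only [oscSet, Set.mem_setOf_eq, Matrix.cons_val_zero, Matrix.cons_val_one,
      Matrix.head_cons, Matrix.cons_val_two, Matrix.tail_cons, Matrix.cons_val_three,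
      Set.mem_insert_iff, Set.mem_singleton_iff, Option.some.injEq]
    constructor
    · intro h
      have hsq : (t + 1) ^ 2 = 0 := by linear_combination h + (t - t^2) * h2
      have h1 : t + 1 = 0 := by
        exact pow_eq_zero_iff (n := 2) (by norm_num) |>.mp hsq
      right
      linear_combination h1 - h2
    · rintro (h | rfl)
      · exact absurd h (by simp)
      · linear_combination 2 * h2

private lemma span_inj (μ : F) :
    Function.Injective (fun γ : F => Submodule.span F {![γ, μ, γ, 1]}) := by
  intro a b hab
  simp only at hab
  have : (![a, μ, a, 1] : Fin 4 → F) ∈ Submodule.span F {![b, μ, b, 1]} := by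
    rw [← hab]; exact Submodule.mem_span_singleton_self _
  obtain ⟨c, hc⟩ := Submodule.mem_span_singleton.mp this
  have h3 := congrFun hc 3
  have h0 := congrFun hc 0
  simp [Pi.smul_apply, smul_eq_mul] at h3 h0
  rw [h3, one_mul] at h0
  exact h0.symm

private theorem stmt17_aux (h2 : (2:F) = 0) (μ : F) :
    Set.ncard {p ∈ ({p | p = Submodule.span F {![1, 0, 1, 0]} ∨
        ∃ γ : F, p = Submodule.span F {![γ, μ, γ, 1]}} : Set (Submodule F (Fin 4 → F))) |
      Set.ncard {π : Set (Fin 4 → F) |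
        (∃ τ : Option F, π = oscSet τ) ∧ (p : Set (Fin 4 → F)) ⊆ π} = 1}
      = Set.ncard {γ : F |
          ({t : F | t ^ 3 + γ * t ^ 2 + μ * t + γ = 0} : Set F).ncard = 1} := by
  -- number of osculating planes through span{v} = number of valid parameters
  have hnum : ∀ v : Fin 4 → F,
      Set.ncard {π : Set (Fin 4 → F) | (∃ τ : Option F, π = oscSet τ) ∧
        (↑(Submodule.span F {v}) : Set (Fin 4 → F)) ⊆ π}
      = Set.ncard {τ : Option F | v ∈ oscSet τ} := by
    intro v
    rw [osc_through_eq v, Set.ncard_image_of_injective _ (oscSet_injective h2)]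
  -- for the affine points of the line
  have hγnum : ∀ γ : F,
      Set.ncard {τ : Option F | (![γ, μ, γ, 1] : Fin 4 → F) ∈ oscSet τ}
        = Set.ncard {t : F | t ^ 3 + γ * t ^ 2 + μ * t + γ = 0} := by
    intro γ
    rw [tau_set_eq h2 μ γ, Set.ncard_image_of_injective _ (Option.some_injective F)]
  -- for the point at infinity
  have hinf : Set.ncard {τ : Option F | (![1, 0, 1, 0] : Fin 4 → F) ∈ oscSet τ} = 2 := by
    rw [inf_tau_set_eq h2]
    exact Set.ncard_pair (by simp)
  -- the LHS set is the image of the RHS set under γ ↦ span{(γ,μ,γ,1)}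
  have hseteq : {p ∈ ({p | p = Submodule.span F {![1, 0, 1, 0]} ∨
        ∃ γ : F, p = Submodule.span F {![γ, μ, γ, 1]}} : Set (Submodule F (Fin 4 → F))) |
      Set.ncard {π : Set (Fin 4 → F) |
        (∃ τ : Option F, π = oscSet τ) ∧ (p : Set (Fin 4 → F)) ⊆ π} = 1}
      = (fun γ : F => Submodule.span F {![γ, μ, γ, 1]}) ''
        {γ : F | ({t : F | t ^ 3 + γ * t ^ 2 + μ * t + γ = 0} : Set F).ncard = 1} := by
    ext p
    simp only [Set.mem_setOf_eq, Set.mem_image]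
    constructor
    · rintro ⟨hline, hone⟩
      rcases hline with rfl | ⟨γ, rfl⟩
      · rw [hnum, hinf] at hone
        exact absurd hone (by norm_num)
      · rw [hnum, hγnum] at hone
        exact ⟨γ, hone, rfl⟩
    · rintro ⟨γ, hγ, rfl⟩
      refine ⟨Or.inr ⟨γ, rfl⟩, ?_⟩
      rw [hnum, hγnum]
      exact hγ
  rw [hseteq, Set.ncard_image_of_injective _ (span_inj μ)]

end aux

/-- Let `q = 2^n ≥ 8` be an even prime power and `μ ∈ F_q^*`, `μ ≠ 1`.
Then the number of points of the line `ℓ_μ` lying in exactly one osculating plane of the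
twisted cubic equals the number of `γ ∈ F_q` such that `t³ + γt² + μt + γ` has exactly
one root in `F_q`. -/
theorem stmt17 (n : ℕ) (hn : 3 ≤ n) (μ : GaloisField 2 n) (hμ0 : μ ≠ 0) (hμ1 : μ ≠ 1) :
    let F := GaloisField 2 n
    let linePts : Set (Submodule F (Fin 4 → F)) :=
      {p | p = Submodule.span F {![1, 0, 1, 0]} ∨
        ∃ γ : F, p = Submodule.span F {![γ, μ, γ, 1]}}
    let numOsc : Submodule F (Fin 4 → F) → ℕ := fun p =>
      Set.ncard {π : Set (Fin 4 → F) |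
        (∃ τ : Option F, π = oscSet τ) ∧ (p : Set (Fin 4 → F)) ⊆ π}
    Set.ncard {p ∈ linePts | numOsc p = 1}
      = Set.ncard {γ : F |
          ({t : F | t ^ 3 + γ * t ^ 2 + μ * t + γ = 0} : Set F).ncard = 1} := by
  intro F linePts numOsc
  have h2 : (2 : GaloisField 2 n) = 0 := by
    have := CharP.cast_eq_zero (GaloisField 2 n) 2
    exact_mod_cast this
  exact stmt17_aux h2 μ
end

section
/- Let q ≥ 5 be an odd prime power not divisible by 3, and let μ ∈ F_q^* with μ ≠ 1 and μ ≠ 1/9. Let N̄₁(μ) be the number of γ ∈ F_q such that the cubic t³ - 3γt² + 3μt - γ has exactly one root in F_q. Then the number of points of the line ℓ_μ lying in exactly one osculating plane of the twisted cubic equals N̄₁(μ) + 1 if q ≡ -1 (mod 3) and equals N̄₁(μ) if q ≡ 1 (mod 3). -/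
section AuxLemmas

variable {F : Type*} [Field F]

lemma oscSet_smul' {τ : Option F} {v : Fin 4 → F} (hv : v ∈ oscSet τ) (c : F) :
    c • v ∈ oscSet τ := by
  cases τ with
  | none =>
    simp only [oscSet, Set.mem_setOf_eq, Pi.smul_apply, smul_eq_mul] at *
    rw [hv]; ring
  | some t =>
    simp only [oscSet, Set.mem_setOf_eq, Pi.smul_apply, smul_eq_mul] at *
    linear_combination c * hv

lemma span_subset_oscSet_iff' {τ : Option F} {v : Fin 4 → F} :
    ((Submodule.span F {v} : Submodule F (Fin 4 → F)) : Set (Fin 4 → F)) ⊆ oscSet τ ↔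
      v ∈ oscSet τ := by
  constructor
  · intro h; exact h (Submodule.mem_span_singleton_self v)
  · intro h x hx
    rw [SetLike.mem_coe, Submodule.mem_span_singleton] at hx
    obtain ⟨c, rfl⟩ := hx
    exact oscSet_smul' h c

lemma mem_osc_none_iff' (γ μ : F) :
    (![γ, μ, γ, 1] : Fin 4 → F) ∈ oscSet (none : Option F) ↔ False := by
  simp [oscSet]

lemma mem_osc_some_iff' (γ μ t : F) :
    (![γ, μ, γ, 1] : Fin 4 → F) ∈ oscSet (some t) ↔
      t ^ 3 - 3 * γ * t ^ 2 + 3 * μ * t - γ = 0 := by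
  simp only [oscSet, Set.mem_setOf_eq]
  norm_num [Matrix.cons_val_zero, Matrix.cons_val_one, Matrix.head_cons, Matrix.cons_val_two, Matrix.cons_val_three, Matrix.tail_cons]
  constructor <;> intro h <;> linear_combination -h

lemma inf_mem_osc_none' : (![1, 0, 1, 0] : Fin 4 → F) ∈ oscSet (none : Option F) := by
  simp [oscSet]

lemma inf_mem_osc_some_iff' (t : F) :
    (![1, 0, 1, 0] : Fin 4 → F) ∈ oscSet (some t) ↔ 3 * t ^ 2 + 1 = 0 := by
  simp only [oscSet, Set.mem_setOf_eq]
  norm_num [Matrix.cons_val_zero, Matrix.cons_val_one, Matrix.head_cons, Matrix.cons_val_two, Matrix.cons_val_three, Matrix.tail_cons]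
  constructor <;> intro h <;> linear_combination h

lemma oscSet_injective' : Function.Injective (oscSet (F := F)) := by
  have key : ∀ t s : F, oscSet (some t) = oscSet (some s) → t = s := by
    intro t s h
    have h1 : (![t ^ 3, t ^ 2, t, 1] : Fin 4 → F) ∈ oscSet (some t) := by
      simp only [oscSet, Set.mem_setOf_eq]
      norm_num [Matrix.cons_val_zero, Matrix.cons_val_one, Matrix.head_cons, Matrix.cons_val_two, Matrix.cons_val_three, Matrix.tail_cons]
      ring
    rw [h] at h1
    simp only [oscSet, Set.mem_setOf_eq] at h1
    norm_num [Matrix.cons_val_zero, Matrix.cons_val_one, Matrix.head_cons, Matrix.cons_val_two, Matrix.cons_val_three, Matrix.tail_cons] at h1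
    have h2 : (t - s) ^ 3 = 0 := by linear_combination h1
    have h4 := pow_eq_zero_iff (n := 3) (by norm_num) |>.mp h2
    exact sub_eq_zero.mp h4
  have key2 : ∀ t : F, oscSet (some t) ≠ oscSet (none : Option F) := by
    intro t h
    have h1 : (![1, 0, 0, 0] : Fin 4 → F) ∈ oscSet (none : Option F) := by simp [oscSet]
    rw [← h] at h1
    simp only [oscSet, Set.mem_setOf_eq] at h1
    norm_num [Matrix.cons_val_zero, Matrix.cons_val_one, Matrix.head_cons, Matrix.cons_val_two, Matrix.cons_val_three, Matrix.tail_cons] at h1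
  intro τ σ h
  match τ, σ with
  | none, none => rfl
  | none, some t => exact absurd h.symm (key2 t)
  | some t, none => exact absurd h (key2 t)
  | some t, some s => exact congrArg some (key t s h)

variable [Fintype F]

lemma root_exists' (q : ℕ) (hcard : Fintype.card F = q) (hq5 : 5 ≤ q) (hq1 : q % 3 = 1)
    (h3 : (3 : F) ≠ 0) : ∃ t : F, 3 * t ^ 2 + 1 = 0 := by
  have hdvd : 3 ∣ q - 1 := by omega
  obtain ⟨g, hg⟩ := IsCyclic.exists_generator (α := Fˣ)
  have hcardu : Nat.card Fˣ = q - 1 := by rw [Nat.card_units, Nat.card_eq_fintype_card, hcard]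
  have horder : orderOf g = q - 1 := by
    rw [orderOf_eq_card_of_forall_mem_zpowers hg, hcardu]
  set ω : Fˣ := g ^ ((q - 1) / 3) with hω
  have hω3 : ω ^ 3 = 1 := by
    rw [hω, ← pow_mul, Nat.div_mul_cancel hdvd, ← hcardu, pow_card_eq_one']
  have hω1 : ω ≠ 1 := by
    intro h
    have : orderOf g ∣ (q - 1) / 3 := orderOf_dvd_of_pow_eq_one h
    rw [horder] at this
    have h1 : (q - 1) / 3 ≠ 0 := by omega
    have := Nat.le_of_dvd (Nat.pos_of_ne_zero h1) this
    omega
  set w : F := (ω : F) with hw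
  have hw3 : w ^ 3 = 1 := by
    rw [hw, ← Units.val_pow_eq_pow_val, hω3, Units.val_one]
  have hw1 : w ≠ 1 := fun h => hω1 (Units.ext h)
  have hquad : w ^ 2 + w + 1 = 0 := by
    have hfac : (w - 1) * (w ^ 2 + w + 1) = 0 := by linear_combination hw3
    rcases mul_eq_zero.mp hfac with h | h
    · exact absurd (sub_eq_zero.mp h) hw1
    · exact h
  refine ⟨(2 * w + 1) / 3, ?_⟩
  have key : 3 * ((2 * w + 1) / 3) ^ 2 + 1 = 4 * (w ^ 2 + w + 1) / 3 := by
    field_simp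
    ring
  rw [key, hquad]
  simp

lemma no_root' (q : ℕ) (hcard : Fintype.card F = q) (hq5 : 5 ≤ q) (hq2 : q % 3 = 2)
    (h2 : (2 : F) ≠ 0) (h3 : (3 : F) ≠ 0) : ∀ t : F, 3 * t ^ 2 + 1 ≠ 0 := by
  intro t ht
  set ω : F := (3 * t - 1) / 2 with hω
  have h4 : (4 : F) ≠ 0 := by
    intro h
    exact h2 (by apply mul_self_eq_zero.mp; linear_combination h)
  have hquad : ω ^ 2 + ω + 1 = 0 := by
    have key : ω ^ 2 + ω + 1 = 3 * (3 * t ^ 2 + 1) / 4 := by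
      rw [hω]; field_simp; ring
    rw [key, ht]
    simp
  have hω0 : ω ≠ 0 := by
    intro h; rw [h] at hquad; norm_num at hquad
  have hω1 : ω ≠ 1 := by
    intro h
    apply h3
    rw [h] at hquad
    linear_combination hquad
  have hω3 : ω ^ 3 = 1 := by linear_combination (ω - 1) * hquad
  set u : Fˣ := Units.mk0 ω hω0 with hu
  have hu3 : u ^ 3 = 1 := by
    ext; rw [Units.val_pow_eq_pow_val]; exact hω3
  have hu1 : u ≠ 1 := by
    intro h
    apply hω1
    have := congrArg (Units.val) h
    simpa [hu] using this
  have hord : orderOf u = 3 := by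
    have hdvd : orderOf u ∣ 3 := orderOf_dvd_of_pow_eq_one hu3
    rcases (Nat.prime_three).eq_one_or_self_of_dvd _ hdvd with h | h
    · exact absurd (orderOf_eq_one_iff.mp h) hu1
    · exact h
  have hdvd2 : 3 ∣ q - 1 := by
    rw [← hord]
    have := orderOf_dvd_natCard u
    rwa [Nat.card_units, Nat.card_eq_fintype_card, hcard] at this
  omega

end AuxLemmas

/-- Let `q ≥ 5` be an odd prime power not divisible by `3`, and
`μ ∈ F_q^*` with `μ ≠ 1`, `μ ≠ 1/9`. Let `N̄₁(μ)` be the number of `γ ∈ F_q` such that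
`t³ - 3γt² + 3μt - γ` has exactly one root in `F_q`. Then the number of points of the
line `ℓ_μ` lying in exactly one osculating plane of the twisted cubic equals
`N̄₁(μ) + 1` if `q ≡ -1 (mod 3)` and equals `N̄₁(μ)` if `q ≡ 1 (mod 3)`. -/
theorem stmt19 (q : ℕ) (hq5 : 5 ≤ q) (hodd : Odd q) (h3 : ¬ (3 ∣ q))
    (F : Type*) [Field F] [Fintype F] (hcard : Fintype.card F = q)
    (μ : F) (hμ0 : μ ≠ 0) (hμ1 : μ ≠ 1) (hμ9 : μ ≠ 1 / 9) :
    let linePts : Set (Submodule F (Fin 4 → F)) :=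
      {p | p = Submodule.span F {![1, 0, 1, 0]} ∨
        ∃ γ : F, p = Submodule.span F {![γ, μ, γ, 1]}}
    let numOsc : Submodule F (Fin 4 → F) → ℕ := fun p =>
      Set.ncard {π : Set (Fin 4 → F) |
        (∃ τ : Option F, π = oscSet τ) ∧ (p : Set (Fin 4 → F)) ⊆ π}
    let N1 : ℕ := Set.ncard {γ : F |
      ({t : F | t ^ 3 - 3 * γ * t ^ 2 + 3 * μ * t - γ = 0} : Set F).ncard = 1}
    (q % 3 = 2 → Set.ncard {p ∈ linePts | numOsc p = 1} = N1 + 1) ∧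
    (q % 3 = 1 → Set.ncard {p ∈ linePts | numOsc p = 1} = N1) := by
  intro linePts numOsc N1
  -- characteristic facts
  have hchardvd : ringChar F ∣ q := by
    obtain ⟨n, hn⟩ := FiniteField.card F (ringChar F)
    rw [← hcard, hn.2]
    exact dvd_pow_self _ (PNat.ne_zero n)
  have hF2 : (2 : F) ≠ 0 := by
    intro h
    have h2 : ((2 : ℕ) : F) = 0 := by exact_mod_cast h
    rw [CharP.cast_eq_zero_iff F (ringChar F)] at h2
    have hp : (ringChar F).Prime := CharP.char_is_prime F (ringChar F)
    have : ringChar F = 2 := (Nat.prime_dvd_prime_iff_eq hp Nat.prime_two).mp h2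
    rw [this] at hchardvd
    rw [Nat.odd_iff] at hodd
    omega
  have hF3 : (3 : F) ≠ 0 := by
    intro h
    have h2 : ((3 : ℕ) : F) = 0 := by exact_mod_cast h
    rw [CharP.cast_eq_zero_iff F (ringChar F)] at h2
    have hp : (ringChar F).Prime := CharP.char_is_prime F (ringChar F)
    have : ringChar F = 3 := (Nat.prime_dvd_prime_iff_eq hp Nat.prime_three).mp h2
    rw [this] at hchardvd
    exact h3 hchardvd
  -- counting osculating planes through a spanned point
  have hnum : ∀ v : Fin 4 → F,
      numOsc (Submodule.span F {v}) = Set.ncard {τ : Option F | v ∈ oscSet τ} := by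
    intro v
    have himg : {π : Set (Fin 4 → F) | (∃ τ : Option F, π = oscSet τ) ∧
        ((Submodule.span F {v} : Submodule F (Fin 4 → F)) : Set (Fin 4 → F)) ⊆ π}
        = oscSet '' {τ : Option F | v ∈ oscSet τ} := by
      ext π
      simp only [Set.mem_setOf_eq, Set.mem_image]
      constructor
      · rintro ⟨⟨τ, rfl⟩, hsub⟩
        exact ⟨τ, span_subset_oscSet_iff'.mp hsub, rfl⟩
      · rintro ⟨τ, hτ, rfl⟩
        exact ⟨⟨τ, rfl⟩, span_subset_oscSet_iff'.mpr hτ⟩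
    simp only [numOsc]
    rw [himg, Set.ncard_image_of_injective _ oscSet_injective']
  -- the set of planes through the affine points
  have hPset : ∀ γ : F, {τ : Option F | (![γ, μ, γ, 1] : Fin 4 → F) ∈ oscSet τ}
      = Option.some '' {t : F | t ^ 3 - 3 * γ * t ^ 2 + 3 * μ * t - γ = 0} := by
    intro γ
    ext τ
    cases τ with
    | none => simp [mem_osc_none_iff' γ μ]
    | some t => simp [mem_osc_some_iff' γ μ t]
  have hPnum : ∀ γ : F, numOsc (Submodule.span F {(![γ, μ, γ, 1] : Fin 4 → F)})
      = ({t : F | t ^ 3 - 3 * γ * t ^ 2 + 3 * μ * t - γ = 0} : Set F).ncard := by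
    intro γ
    rw [hnum, hPset, Set.ncard_image_of_injective _ (Option.some_injective F)]
  -- the set of planes through the point at infinity
  have hIset : {τ : Option F | (![1, 0, 1, 0] : Fin 4 → F) ∈ oscSet τ}
      = insert none (Option.some '' {t : F | 3 * t ^ 2 + 1 = 0}) := by
    ext τ
    cases τ with
    | none => simp [inf_mem_osc_none']
    | some t => simp [inf_mem_osc_some_iff' t]
  -- injectivity of the affine parametrization
  have heinj : Function.Injective
      (fun γ : F => Submodule.span F {(![γ, μ, γ, 1] : Fin 4 → F)}) := by
    intro a b h
    simp only at h
    have hmem : (![a, μ, a, 1] : Fin 4 → F) ∈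
        Submodule.span F {(![b, μ, b, 1] : Fin 4 → F)} := by
      rw [← h]; exact Submodule.mem_span_singleton_self _
    rw [Submodule.mem_span_singleton] at hmem
    obtain ⟨c, hc⟩ := hmem
    have h3' := congrFun hc 3
    have h0' := congrFun hc 0
    simp [Pi.smul_apply, smul_eq_mul] at h3' h0'
    rw [h3', one_mul] at h0'
    exact h0'.symm
  -- the point at infinity is not an affine point
  have hInf_ne : ∀ γ : F, Submodule.span F {(![1, 0, 1, 0] : Fin 4 → F)} ≠
      Submodule.span F {(![γ, μ, γ, 1] : Fin 4 → F)} := by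
    intro γ h
    have hmem : (![γ, μ, γ, 1] : Fin 4 → F) ∈
        Submodule.span F {(![1, 0, 1, 0] : Fin 4 → F)} := by
      rw [h]; exact Submodule.mem_span_singleton_self _
    rw [Submodule.mem_span_singleton] at hmem
    obtain ⟨c, hc⟩ := hmem
    have h3' := congrFun hc 3
    simp [Pi.smul_apply, smul_eq_mul] at h3'
  constructor
  · -- q ≡ 2 (mod 3)
    intro hq2
    have hno : {t : F | 3 * t ^ 2 + 1 = 0} = ∅ := by
      ext t
      simp [no_root' q hcard hq5 hq2 hF2 hF3 t]
    have hInfnum : numOsc (Submodule.span F {(![1, 0, 1, 0] : Fin 4 → F)}) = 1 := by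
      rw [hnum, hIset, hno]
      simp
    have hkey : {p ∈ linePts | numOsc p = 1} =
        insert (Submodule.span F {(![1, 0, 1, 0] : Fin 4 → F)})
          ((fun γ : F => Submodule.span F {(![γ, μ, γ, 1] : Fin 4 → F)}) ''
            {γ : F | ({t : F | t ^ 3 - 3 * γ * t ^ 2 + 3 * μ * t - γ = 0} : Set F).ncard = 1}) := by
      ext p
      simp only [Set.mem_setOf_eq, Set.mem_insert_iff, Set.mem_image, linePts]
      constructor
      · rintro ⟨hp | ⟨γ, rfl⟩, hnum1⟩
        · left; exact hp
        · right; exact ⟨γ, by rw [← hPnum γ]; exact hnum1, rfl⟩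
      · rintro (rfl | ⟨γ, hγ, rfl⟩)
        · exact ⟨Or.inl rfl, hInfnum⟩
        · exact ⟨Or.inr ⟨γ, rfl⟩, by rw [hPnum γ]; exact hγ⟩
    have hnotmem : Submodule.span F {(![1, 0, 1, 0] : Fin 4 → F)} ∉
        (fun γ : F => Submodule.span F {(![γ, μ, γ, 1] : Fin 4 → F)}) ''
          {γ : F | ({t : F | t ^ 3 - 3 * γ * t ^ 2 + 3 * μ * t - γ = 0} : Set F).ncard = 1} := by
      rintro ⟨γ, _, hγ⟩
      exact hInf_ne γ hγ.symm
    rw [hkey, Set.ncard_insert_of_notMem hnotmem (Set.toFinite _),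
      Set.ncard_image_of_injective _ heinj]
  · -- q ≡ 1 (mod 3)
    intro hq1
    obtain ⟨t0, ht0⟩ := root_exists' q hcard hq5 hq1 hF3
    have hInfnum : numOsc (Submodule.span F {(![1, 0, 1, 0] : Fin 4 → F)}) ≠ 1 := by
      rw [hnum]
      have hlt : 1 < Set.ncard {τ : Option F | (![1, 0, 1, 0] : Fin 4 → F) ∈ oscSet τ} := by
        rw [Set.one_lt_ncard_iff (Set.toFinite _)]
        refine ⟨none, some t0, ?_, ?_, by simp⟩
        · exact inf_mem_osc_none'
        · exact (inf_mem_osc_some_iff' t0).mpr ht0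
      omega
    have hkey : {p ∈ linePts | numOsc p = 1} =
        (fun γ : F => Submodule.span F {(![γ, μ, γ, 1] : Fin 4 → F)}) ''
          {γ : F | ({t : F | t ^ 3 - 3 * γ * t ^ 2 + 3 * μ * t - γ = 0} : Set F).ncard = 1} := by
      ext p
      simp only [Set.mem_setOf_eq, Set.mem_image, linePts]
      constructor
      · rintro ⟨hp | ⟨γ, rfl⟩, hnum1⟩
        · exact absurd (hp ▸ hnum1) hInfnum
        · exact ⟨γ, by rw [← hPnum γ]; exact hnum1, rfl⟩
      · rintro ⟨γ, hγ, rfl⟩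
        exact ⟨Or.inr ⟨γ, rfl⟩, by rw [hPnum γ]; exact hγ⟩
    rw [hkey, Set.ncard_image_of_injective _ heinj]
end
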